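/- arXiv:2007.11517 — 3 statements merged into one kernel-verified Lean document; each statement's English description precedes it below -/
import Mathlib

section
/- Let (p_1,...,p_N) be a probability vector with all p_i > 0 and let r_1,...,r_N ∈ (0,1). Let s ≥ 0 be the unique real number with ∑_{i=1}^N r_i^s = 1, and define t := max_{1 ≤ i ≤ N} (log p_i)/(log r_i). Then t ≥ s, with equality if and only if p_i = r_i^s for all i. -/
/-- Let (p_1,...,p_N) be a probability vector with all p_i > 0 and
r_1,...,r_N ∈ (0,1). Let s ≥ 0 be the unique real with ∑ r_i^s = 1 and
t := max_i (log p_i)/(log r_i). Then t ≥ s, with equality iff p_i = r_i^s for all i. -/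
theorem stmt0 {N : ℕ} (hN : 0 < N) (p r : Fin N → ℝ)
    (hp : ∀ i, 0 < p i) (hpsum : ∑ i, p i = 1)
    (hr : ∀ i, r i ∈ Set.Ioo (0 : ℝ) 1)
    (s : ℝ) (hs : 0 ≤ s) (hssum : ∑ i, r i ^ s = 1)
    (t : ℝ)
    (ht_ub : ∀ i, Real.log (p i) / Real.log (r i) ≤ t)
    (ht_mem : ∃ i, Real.log (p i) / Real.log (r i) = t) :
    s ≤ t ∧ (t = s ↔ ∀ i, p i = r i ^ s) := by
  haveI : Nonempty (Fin N) := ⟨⟨0, hN⟩⟩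
  have hlr : ∀ i, Real.log (r i) < 0 := fun i => Real.log_neg (hr i).1 (hr i).2
  have key : ∀ i, r i ^ t ≤ p i := by
    intro i
    have h := (div_le_iff_of_neg (hlr i)).mp (ht_ub i)
    have h2 : Real.exp (Real.log (r i) * t) ≤ Real.exp (Real.log (p i)) :=
      Real.exp_le_exp.mpr (by linarith)
    rwa [← Real.rpow_def_of_pos (hr i).1, Real.exp_log (hp i)] at h2
  have hst : s ≤ t := by
    by_contra hlt
    push_neg at hlt
    have h1 : ∑ i, r i ^ s < ∑ i, r i ^ t :=
      Finset.sum_lt_sum_of_nonempty Finset.univ_nonempty fun i _ =>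
        Real.rpow_lt_rpow_of_exponent_gt (hr i).1 (hr i).2 hlt
    have h2 : ∑ i, r i ^ t ≤ ∑ i, p i := Finset.sum_le_sum fun i _ => key i
    linarith
  refine ⟨hst, ⟨fun hts => ?_, fun hall => ?_⟩⟩
  · -- t = s, show p i = r i ^ s for all i
    subst hts
    intro i
    by_contra hne
    have hlt : r i ^ t < p i := lt_of_le_of_ne (key i) (Ne.symm hne)
    have h1 : ∑ j, r j ^ t < ∑ j, p j :=
      Finset.sum_lt_sum (fun j _ => key j) ⟨i, Finset.mem_univ i, hlt⟩
    linarith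
  · -- ∀ i, p i = r i ^ s, show t = s
    obtain ⟨i, hi⟩ := ht_mem
    rw [← hi, hall i, Real.log_rpow (hr i).1, mul_div_assoc,
      div_self (hlr i).ne, mul_one]
end

section
/- The matrix A_δ is primitive, hence irreducible: with L_δ = max{|i| : i ∈ P_δ}, every entry of the matrix power A_δ^{L_δ} is strictly positive. -/
/-- The cylinder set of a finite word: infinite sequences beginning with that word. -/
def cyl {N : ℕ} (l : List (Fin N)) : Set (ℕ → Fin N) :=
  {ω | ∀ k : Fin l.length, ω k = l.get k}

/-- Product of contraction ratios along a word. -/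
def rword {N : ℕ} (r : Fin N → ℝ) (l : List (Fin N)) : ℝ := (l.map r).prod

/-- The stopping set P_δ = { i : r_i ≤ δ < r_{i^-} }. -/
def Pdelta {N : ℕ} (r : Fin N → ℝ) (δ : ℝ) : Set (List (Fin N)) :=
  {l | rword r l ≤ δ ∧ δ < rword r l.dropLast}


/-- Product of probabilities along a word. -/
def pword {N : ℕ} (p : Fin N → ℝ) (l : List (Fin N)) : ℝ := (l.map p).prod

namespace Stmt7Aux

variable {N : ℕ}

lemma rword_nil (r : Fin N → ℝ) : rword r ([] : List (Fin N)) = 1 := rfl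

lemma rword_cons (r : Fin N → ℝ) (a : Fin N) (l : List (Fin N)) :
    rword r (a :: l) = r a * rword r l := by simp [rword]

lemma rword_append (r : Fin N → ℝ) (l₁ l₂ : List (Fin N)) :
    rword r (l₁ ++ l₂) = rword r l₁ * rword r l₂ := by simp [rword]

lemma rword_pos (r : Fin N → ℝ) (hr : ∀ i, 0 < r i) (l : List (Fin N)) :
    0 < rword r l := by
  induction l with
  | nil => norm_num [rword_nil]
  | cons a l ih => rw [rword_cons]; exact mul_pos (hr a) ih

lemma rword_le_one (r : Fin N → ℝ) (hr : ∀ i, r i ∈ Set.Ioo (0:ℝ) 1) (l : List (Fin N)) :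
    rword r l ≤ 1 := by
  induction l with
  | nil => norm_num [rword_nil]
  | cons a l ih =>
      rw [rword_cons]
      have h1 := (hr a).1
      have h2 := (hr a).2
      have h3 := rword_pos r (fun i => (hr i).1) l
      nlinarith

lemma rword_anti (r : Fin N → ℝ) (hr : ∀ i, r i ∈ Set.Ioo (0:ℝ) 1)
    {u v : List (Fin N)} (h : u <+: v) : rword r v ≤ rword r u := by
  obtain ⟨t, rfl⟩ := h
  rw [rword_append]
  have h1 := rword_le_one r hr t
  have h2 := rword_pos r (fun i => (hr i).1) u
  nlinarith

lemma exists_prefix_mem (r : Fin N → ℝ) (hr : ∀ i, r i ∈ Set.Ioo (0:ℝ) 1) (δ : ℝ)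
    (hδ1 : δ < 1) :
    ∀ w : List (Fin N), rword r w ≤ δ → ∃ u ∈ Pdelta r δ, u <+: w := by
  suffices H : ∀ n (w : List (Fin N)), w.length ≤ n → rword r w ≤ δ →
      ∃ u ∈ Pdelta r δ, u <+: w by
    intro w hw; exact H w.length w le_rfl hw
  intro n
  induction n with
  | zero =>
      intro w hlen hw
      have : w = [] := List.length_eq_zero_iff.mp (Nat.le_zero.mp hlen)
      subst this
      rw [rword_nil] at hw; linarith
  | succ n ih =>
      intro w hlen hw
      by_cases h : δ < rword r w.dropLast
      · exact ⟨w, ⟨hw, h⟩, List.prefix_rfl⟩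
      · have hne : w ≠ [] := by
          rintro rfl; rw [rword_nil] at hw; linarith
        have hlen' : w.dropLast.length ≤ n := by
          rw [List.length_dropLast]
          have : 1 ≤ w.length := List.length_pos_iff.mpr hne
          omega
        obtain ⟨u, hu, hp⟩ := ih w.dropLast hlen' (le_of_not_gt h)
        exact ⟨u, hu, hp.trans (List.dropLast_prefix w)⟩

lemma prefix_unique (r : Fin N → ℝ) (hr : ∀ i, r i ∈ Set.Ioo (0:ℝ) 1) (δ : ℝ)
    {u v w : List (Fin N)} (hu : u ∈ Pdelta r δ) (hv : v ∈ Pdelta r δ)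
    (hu' : u <+: w) (hv' : v <+: w) : u = v := by
  have key : ∀ {x y : List (Fin N)}, x ∈ Pdelta r δ → y ∈ Pdelta r δ → x <+: y → x = y := by
    intro x y hx hy hxy
    by_contra hne
    have hlt : x.length < y.length := by
      have h1 := hxy.length_le
      rcases lt_or_eq_of_le h1 with h | h
      · exact h
      · exact absurd (List.IsPrefix.eq_of_length hxy h) hne
    have hpre : x <+: y.dropLast := by
      have hx' : x = y.take x.length := List.prefix_iff_eq_take.mp hxy
      have : y.dropLast.take x.length = x := by
        rw [List.dropLast_eq_take, List.take_take, min_eq_left (by omega)]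
        exact hx'.symm
      exact this ▸ List.take_prefix _ _
    have := rword_anti r hr hpre
    have h1 := hx.1
    have h2 := hy.2
    change rword r x ≤ δ at h1
    change δ < rword r y.dropLast at h2
    linarith
  rcases List.prefix_or_prefix_of_prefix hu' hv' with h | h
  · exact key hu hv h
  · exact (key hv hu h).symm

lemma cyl_anti {l₁ l₂ : List (Fin N)} (h : l₁ <+: l₂) : cyl l₂ ⊆ cyl l₁ := by
  intro ω hω k
  obtain ⟨t, rfl⟩ := h
  have hk : (k : ℕ) < (l₁ ++ t).length := by
    simp only [List.length_append]
    omega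
  have := hω ⟨k, hk⟩
  simp only [cyl, Set.mem_setOf_eq] at this ⊢
  rw [this]
  simp only [List.get_eq_getElem]
  exact List.getElem_append_left k.2

end Stmt7Aux

open Classical in
/-- The transition matrix A_δ: entry a_{i,j} = p_a if [a i] ⊆ [j] (for the
necessarily unique such letter a), and 0 otherwise. -/
noncomputable def Amat {N : ℕ} (p : Fin N → ℝ) (i j : List (Fin N)) : ℝ :=
  ∑ a : Fin N, if cyl (a :: i) ⊆ cyl j then p a else 0

open Stmt7Aux

/-- A_δ is primitive (hence irreducible): with
L_δ = max{|i| : i ∈ P_δ}, every entry of A_δ^{L_δ} is strictly positive. -/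
theorem stmt7 {N : ℕ} (hN : 0 < N) (p r : Fin N → ℝ)
    (hp : ∀ i, 0 < p i) (hpsum : ∑ i, p i = 1)
    (hr : ∀ i, r i ∈ Set.Ioo (0 : ℝ) 1)
    (δ : ℝ) (hδ0 : 0 < δ) (hδ : ∀ i, δ < r i)
    [Fintype {l : List (Fin N) // l ∈ Pdelta r δ}]
    (A : Matrix {l : List (Fin N) // l ∈ Pdelta r δ}
                {l : List (Fin N) // l ∈ Pdelta r δ} ℝ)
    (hA : ∀ i j, A i j = Amat p i.1 j.1)
    (L : ℕ) (hL : IsGreatest (List.length '' Pdelta r δ) L) :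
    ∀ i j, 0 < (A ^ L) i j := by
  classical
  intro i j
  have hδ1 : δ < 1 := lt_trans (hδ ⟨0, hN⟩) (hr ⟨0, hN⟩).2
  have hA_nonneg : ∀ x y, 0 ≤ A x y := by
    intro x y
    rw [hA]
    apply Finset.sum_nonneg
    intro a _
    split
    · exact (hp a).le
    · exact le_rfl
  have hstep : ∀ x y (a : Fin N), y.1 <+: a :: x.1 → 0 < A x y := by
    intro x y a hpre
    rw [hA]
    apply Finset.sum_pos' (fun b _ => by split; exacts [(hp b).le, le_rfl])
    refine ⟨a, Finset.mem_univ a, ?_⟩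
    rw [if_pos (cyl_anti hpre)]
    exact hp a
  have hnext : ∀ (a : Fin N) (x : {l : List (Fin N) // l ∈ Pdelta r δ}),
      ∃ y : {l : List (Fin N) // l ∈ Pdelta r δ}, y.1 <+: a :: x.1 := by
    intro a x
    have hx : rword r (a :: x.1) ≤ δ := by
      rw [rword_cons]
      have h1 := x.2.1
      have h2 := (hr a).1
      have h3 := (hr a).2
      have h4 := rword_pos r (fun b => (hr b).1) x.1
      nlinarith
    obtain ⟨u, hu, hpre⟩ := exists_prefix_mem r hr δ hδ1 (a :: x.1) hx
    exact ⟨⟨u, hu⟩, hpre⟩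
  choose f hf using hnext
  set F : List (Fin N) → {l : List (Fin N) // l ∈ Pdelta r δ} →
      {l : List (Fin N) // l ∈ Pdelta r δ} := fun l x => l.foldr f x with hF
  have hF_nil : ∀ x, F [] x = x := fun x => rfl
  have hF_cons : ∀ a l x, F (a :: l) x = f a (F l x) := fun a l x => rfl
  have hF_append : ∀ l₁ l₂ x, F (l₁ ++ l₂) x = F l₁ (F l₂ x) := by
    intro l₁ l₂ x; simp [hF, List.foldr_append]
  have hF_prefix : ∀ l x, (F l x).1 <+: l ++ x.1 := by
    intro l
    induction l with
    | nil => intro x; exact List.prefix_rfl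
    | cons a l ih =>
        intro x
        rw [hF_cons]
        exact (hf a (F l x)).trans (List.cons_prefix_cons.mpr ⟨rfl, ih x⟩)
  have hpow_nonneg : ∀ (n : ℕ) x y, 0 ≤ (A ^ n) x y := by
    intro n
    induction n with
    | zero =>
        intro x y
        rw [pow_zero]
        rcases eq_or_ne x y with h | h
        · subst h; rw [Matrix.one_apply_eq]; norm_num
        · rw [Matrix.one_apply_ne h]
    | succ n ih =>
        intro x y
        rw [pow_succ, Matrix.mul_apply]
        exact Finset.sum_nonneg fun z _ => mul_nonneg (ih x z) (hA_nonneg z y)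
  have hpos : ∀ (l : List (Fin N)) x, 0 < (A ^ l.length) x (F l x) := by
    intro l
    induction l with
    | nil => intro x; simp [hF_nil, Matrix.one_apply_eq]
    | cons a l ih =>
        intro x
        rw [List.length_cons, pow_succ, Matrix.mul_apply, hF_cons]
        apply Finset.sum_pos'
          (fun z _ => mul_nonneg (hpow_nonneg _ x z) (hA_nonneg z _))
        refine ⟨F l x, Finset.mem_univ _, ?_⟩
        exact mul_pos (ih x) (hstep (F l x) (f a (F l x)) a (hf a (F l x)))
  have hjL : j.1.length ≤ L := hL.2 ⟨j.1, j.2, rfl⟩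
  set a0 : Fin N := ⟨0, hN⟩
  set w : List (Fin N) := j.1 ++ List.replicate (L - j.1.length) a0 with hw
  have hwlen : w.length = L := by
    simp only [hw, List.length_append, List.length_replicate]
    omega
  have hFw : F w i = j := by
    rw [hw, hF_append]
    set x := F (List.replicate (L - j.1.length) a0) i
    apply Subtype.ext
    exact prefix_unique r hr δ (F j.1 x).2 j.2 (hF_prefix j.1 x) (List.prefix_append j.1 x.1)
  have := hpos w i
  rw [hwlen, hFw] at this
  exact this
end

section
/- (Chaos game becomes dense when all cylinders are visited.) In the setting of the previous statement, let v_0 ∈ F and choose i_0 ∈ P_δ with v_0 ∈ S_{i_0} F. Suppose letters i_1,...,i_n ∈ {1,...,N} are such that for every j ∈ P_δ there exists 0 ≤ k ≤ n with [i_k ... i_1 i_0] ⊆ [j] (as cylinders; for k = 0 this means [i_0] ⊆ [j]). Then the finite set {v_0, S_{i_1}v_0, S_{i_2}S_{i_1}v_0, ..., S_{i_n}···S_{i_1}v_0} is 2δΔ-dense in F, where Δ = diam F. -/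
/-- Composition S_i = S_{i_1} ∘ ⋯ ∘ S_{i_n} along a word. -/
def Sword {N : ℕ} {X : Type*} (S : Fin N → X → X) (l : List (Fin N)) (v : X) : X :=
  l.foldr (fun a w => S a w) v

/-- The chaos game orbit: x_0 = v, x_{k+1} = S_{i_{k+1}} x_k, where i_{k+1} = ω k. -/
def orbit {N : ℕ} {X : Type*} (S : Fin N → X → X) (ω : ℕ → Fin N) (v : X) : ℕ → X
  | 0 => v
  | k + 1 => S (ω k) (orbit S ω v k)

/-- The word i_k i_{k-1} ... i_1 of the first k chosen letters, most recent first
(here i_{m} = ω (m-1)). -/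
def histWord {N : ℕ} (ω : ℕ → Fin N) (k : ℕ) : List (Fin N) :=
  List.ofFn (fun t : Fin k => ω (k - 1 - (t : ℕ)))

section aux
variable {N : ℕ} {X : Type*}

lemma sword_append (S : Fin N → X → X) (a b : List (Fin N)) (v : X) :
    Sword S (a ++ b) v = Sword S a (Sword S b v) := by
  simp [Sword, List.foldr_append]

lemma rword_append (r : Fin N → ℝ) (a b : List (Fin N)) :
    rword r (a ++ b) = rword r a * rword r b := by simp [rword]

lemma rword_pos {r : Fin N → ℝ} (hr : ∀ i, r i ∈ Set.Ioo (0:ℝ) 1) (l : List (Fin N)) :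
    0 < rword r l := by
  induction l with
  | nil => simp [rword]
  | cons a l ih => simpa [rword] using mul_pos (hr a).1 (by simpa [rword] using ih)

lemma rword_le_one {r : Fin N → ℝ} (hr : ∀ i, r i ∈ Set.Ioo (0:ℝ) 1) (l : List (Fin N)) :
    rword r l ≤ 1 := by
  induction l with
  | nil => simp [rword]
  | cons a l ih =>
      have h1 : rword r (a :: l) = r a * rword r l := by simp [rword]
      rw [h1]
      calc r a * rword r l ≤ 1 * 1 := by
            apply mul_le_mul (le_of_lt (hr a).2) ih (le_of_lt (rword_pos hr l)) zero_le_one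
        _ = 1 := by ring

lemma sword_mem_F {S : Fin N → X → X} {F : Set X} (hinv : ∀ i, ∀ x ∈ F, S i x ∈ F)
    (l : List (Fin N)) {x : X} (hx : x ∈ F) : Sword S l x ∈ F := by
  induction l with
  | nil => exact hx
  | cons a l ih => exact hinv a _ ih

lemma hist_succ (ω : ℕ → Fin N) (k : ℕ) :
    histWord ω (k + 1) = ω k :: histWord ω k := by
  simp only [histWord, List.ofFn_succ]
  congr 1
  congr 1
  funext t
  congr 1
  simp only [Fin.val_succ]
  omega

lemma orbit_eq_sword (S : Fin N → X → X) (ω : ℕ → Fin N) (v : X) (k : ℕ) :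
    orbit S ω v k = Sword S (histWord ω k) v := by
  induction k with
  | zero => rfl
  | succ k ih => rw [orbit, ih, hist_succ]; rfl

lemma cyl_subset_prefix (hN : 0 < N) {l j : List (Fin N)} (h : cyl l ⊆ cyl j) :
    j <+: l ∨ l <+: j := by
  classical
  set a : Fin N := ⟨0, hN⟩
  set ω : ℕ → Fin N := fun k => if h : k < l.length then l.get ⟨k, h⟩ else a with hω
  have hωl : ω ∈ cyl l := by
    intro k
    simp [hω, k.isLt]
  have hωj := h hωl
  have key : ∀ k (h1 : k < l.length) (h2 : k < j.length),
      l.get ⟨k, h1⟩ = j.get ⟨k, h2⟩ := by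
    intro k h1 h2
    have := hωj ⟨k, h2⟩
    simpa [hω, h1] using this
  by_cases hlen : j.length ≤ l.length
  · left
    rw [List.prefix_iff_eq_take]
    apply List.ext_get (by simp [hlen])
    intro m hm1 hm2
    simp only [List.get_eq_getElem, List.getElem_take]
    exact (key m (by simp at hm2; omega) hm1).symm
  · right
    rw [List.prefix_iff_eq_take]
    apply List.ext_get (by simp; omega)
    intro m hm1 hm2
    simp only [List.get_eq_getElem, List.getElem_take]
    exact key m hm1 (by simp at hm2; omega)

lemma exists_stop (hN : 0 < N) (S : Fin N → X → X)
    {r : Fin N → ℝ} (hr : ∀ i, r i ∈ Set.Ioo (0:ℝ) 1)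
    {F : Set X} (hFinv : F = ⋃ i, S i '' F)
    {δ : ℝ} (hδ0 : 0 < δ) (hδ1 : δ < 1) :
    ∀ z ∈ F, ∃ j ∈ Pdelta r δ, z ∈ Sword S j '' F := by
  intro z hz
  have hne : (Finset.univ : Finset (Fin N)).Nonempty := ⟨⟨0, hN⟩, Finset.mem_univ _⟩
  set ρ := Finset.univ.sup' hne r with hρ
  have hρ1 : ρ < 1 := (Finset.sup'_lt_iff hne).2 (fun i _ => (hr i).2)
  have hρ0 : 0 < ρ := lt_of_lt_of_le (hr ⟨0, hN⟩).1 (Finset.le_sup' r (Finset.mem_univ _))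
  have hri : ∀ i, r i ≤ ρ := fun i => Finset.le_sup' r (Finset.mem_univ i)
  obtain ⟨m, hm⟩ := exists_pow_lt_of_lt_one hδ0 hρ1
  have key : ∀ m (l : List (Fin N)), z ∈ Sword S l '' F → δ < rword r l →
      ρ ^ m * rword r l ≤ δ → ∃ j ∈ Pdelta r δ, z ∈ Sword S j '' F := by
    intro m
    induction m with
    | zero => intro l hzl hlt hle; simp at hle; linarith
    | succ m ih =>
        intro l hzl hlt hle
        obtain ⟨y, hyF, hy⟩ := hzl
        have hy2 : y ∈ ⋃ i, S i '' F := by rw [← hFinv]; exact hyF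
        obtain ⟨i, x, hxF, hx⟩ := by simpa using hy2
        have hz' : z ∈ Sword S (l ++ [i]) '' F := by
          refine ⟨x, hxF, ?_⟩
          rw [sword_append]
          show Sword S l (S i x) = z
          rw [hx]; exact hy
        by_cases hc : rword r (l ++ [i]) ≤ δ
        · exact ⟨l ++ [i], ⟨hc, by rwa [List.dropLast_concat]⟩, hz'⟩
        · push_neg at hc
          apply ih (l ++ [i]) hz' hc
          rw [rword_append]
          have h1 : rword r [i] = r i := by simp [rword]
          rw [h1]
          calc ρ ^ m * (rword r l * r i) ≤ ρ ^ m * (rword r l * ρ) := by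
                apply mul_le_mul_of_nonneg_left
                  (mul_le_mul_of_nonneg_left (hri i) (le_of_lt (rword_pos hr l)))
                  (pow_nonneg hρ0.le m)
            _ = ρ ^ (m + 1) * rword r l := by ring
            _ ≤ δ := hle
  apply key m []
  · exact ⟨z, hz, rfl⟩
  · simpa [rword] using hδ1
  · simpa [rword] using hm.le

end aux

/-- if the symbolic orbit words i_k...i_1 i_0, 0 ≤ k ≤ n, visit
every cylinder [j], j ∈ P_δ, then {v_0, S_{i_1}v_0, ..., S_{i_n}⋯S_{i_1}v_0}
is 2δΔ-dense in F, where Δ = diam F. -/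
theorem stmt10 {N d : ℕ} (hN : 0 < N)
    (S : Fin N → EuclideanSpace ℝ (Fin d) → EuclideanSpace ℝ (Fin d))
    (r : Fin N → ℝ) (hr : ∀ i, r i ∈ Set.Ioo (0 : ℝ) 1)
    (hsim : ∀ i x y, dist (S i x) (S i y) = r i * dist x y)
    (F : Set (EuclideanSpace ℝ (Fin d)))
    (hFc : IsCompact F) (hFne : F.Nonempty)
    (hFinv : F = ⋃ i, S i '' F)
    (U : Set (EuclideanSpace ℝ (Fin d)))
    (hUopen : IsOpen U) (hUbdd : Bornology.IsBounded U)
    (hUsub : ∀ i, S i '' U ⊆ U)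
    (hUdisj : ∀ i j, i ≠ j → Disjoint (S i '' U) (S j '' U))
    (hUF : (U ∩ F).Nonempty)
    (Δ : ℝ) (hΔ : Δ = Metric.diam F)
    (δ : ℝ) (hδ0 : 0 < δ) (hδ : ∀ i, δ < r i)
    (v0 : EuclideanSpace ℝ (Fin d))
    (i0 : List (Fin N)) (hi0 : i0 ∈ Pdelta r δ) (hv0 : v0 ∈ Sword S i0 '' F)
    (n : ℕ) (ω : ℕ → Fin N)
    (hvisit : ∀ j ∈ Pdelta r δ, ∃ k ≤ n, cyl (histWord ω k ++ i0) ⊆ cyl j) :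
    ∀ z ∈ F, ∃ k ≤ n, dist z (orbit S ω v0 k) ≤ 2 * δ * Δ := by
  intro z hz
  have hδ1 : δ < 1 := lt_trans (hδ ⟨0, hN⟩) (hr ⟨0, hN⟩).2
  have hinv : ∀ i, ∀ x ∈ F, S i x ∈ F := by
    intro i x hx
    rw [hFinv]
    exact Set.mem_iUnion.2 ⟨i, x, hx, rfl⟩
  have hΔ0 : 0 ≤ Δ := hΔ ▸ Metric.diam_nonneg
  have hδΔ : 0 ≤ δ * Δ := mul_nonneg hδ0.le hΔ0
  have hdistF : ∀ a ∈ F, ∀ b ∈ F, dist a b ≤ Δ := by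
    intro a ha b hb
    rw [hΔ]
    exact Metric.dist_le_diam_of_mem hFc.isBounded ha hb
  have dist_sword : ∀ (p : List (Fin N)) a b,
      dist (Sword S p a) (Sword S p b) = rword r p * dist a b := by
    intro p a b
    induction p with
    | nil => simp [Sword, rword]
    | cons i p ih =>
        show dist (S i (Sword S p a)) (S i (Sword S p b)) = rword r (i :: p) * dist a b
        rw [hsim, ih]
        simp [rword]; ring
  obtain ⟨j, hjP, hzj⟩ := exists_stop hN S hr hFinv hδ0 hδ1 z hz
  obtain ⟨k, hk, hsub⟩ := hvisit j hjP
  refine ⟨k, hk, ?_⟩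
  obtain ⟨x0, hx0F, hx0⟩ := hv0
  have horb : orbit S ω v0 k = Sword S (histWord ω k ++ i0) x0 := by
    rw [orbit_eq_sword, sword_append, hx0]
  set l := histWord ω k ++ i0 with hl
  obtain ⟨zf, hzfF, hzf⟩ := hzj
  have hrl : rword r l ≤ δ := by
    rw [hl, rword_append]
    calc rword r (histWord ω k) * rword r i0 ≤ 1 * δ :=
          mul_le_mul (rword_le_one hr _) hi0.1 (rword_pos hr _).le zero_le_one
      _ = δ := one_mul δ
  rcases cyl_subset_prefix hN hsub with ⟨t, ht⟩ | ⟨t, ht⟩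
  · -- j <+: l : j ++ t = l
    have h1 : orbit S ω v0 k = Sword S j (Sword S t x0) := by
      rw [horb, ← ht, sword_append]
    rw [h1, ← hzf, dist_sword]
    have hb : dist zf (Sword S t x0) ≤ Δ :=
      hdistF _ hzfF _ (sword_mem_F hinv t hx0F)
    calc rword r j * dist zf (Sword S t x0) ≤ δ * Δ :=
          mul_le_mul hjP.1 hb dist_nonneg hδ0.le
      _ ≤ 2 * δ * Δ := by linarith
  · -- l <+: j : l ++ t = j
    have h1 : z = Sword S l (Sword S t zf) := by
      rw [← hzf, ← ht, sword_append]
    rw [h1, horb, dist_sword]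
    have hb : dist (Sword S t zf) x0 ≤ Δ :=
      hdistF _ (sword_mem_F hinv t hzfF) _ hx0F
    calc rword r l * dist (Sword S t zf) x0 ≤ δ * Δ :=
          mul_le_mul hrl hb dist_nonneg hδ0.le
      _ ≤ 2 * δ * Δ := by linarith
end
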